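/- For integers i, l ≥ 0 and s > 0, the number Σ over pairs (u,v) with 0 ≤ u ≤ i, 0 ≤ v ≤ l and s = i - 2u + l - 2v of C(i,u)·C(l,v) equals C(i+l, (i+l-s)/2) if s ≤ i+l and i+l-s is even, and 0 otherwise (Vandermonde-type identity (6.10)). -/
import Mathlib


open Finset

/-- the Vandermonde-type identity (6.10): for `i, l ≥ 0` and `s > 0`,
`Σ_{0≤u≤i, 0≤v≤l, s = i-2u+l-2v} C(i,u) C(l,v)` equals `C(i+l, (i+l-s)/2)` when
`s ≤ i+l` and `i+l-s` is even, and `0` otherwise. -/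
theorem vandermonde_type (i l : ℕ) (s : ℕ) (hs : 0 < s) :
    (∑ u ∈ Finset.range (i + 1), ∑ v ∈ Finset.range (l + 1),
        if (s : ℤ) = (i : ℤ) - 2 * u + l - 2 * v then (i.choose u) * (l.choose v) else 0)
      = if s ≤ i + l ∧ (i + l - s) % 2 = 0 then (i + l).choose ((i + l - s) / 2) else 0 := by
  by_cases h : s ≤ i + l ∧ (i + l - s) % 2 = 0
  · rw [if_pos h]
    obtain ⟨hle, hpar⟩ := h
    set k := (i + l - s) / 2 with hkdef
    have hk : 2 * k = i + l - s := by omega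
    have hkle : k ≤ i + l := by omega
    -- Step 1: rewrite the condition as u + v = k
    have step1 : (∑ u ∈ Finset.range (i + 1), ∑ v ∈ Finset.range (l + 1),
        if (s : ℤ) = (i : ℤ) - 2 * u + l - 2 * v then (i.choose u) * (l.choose v) else 0)
        = ∑ u ∈ Finset.range (i + 1), ∑ v ∈ Finset.range (l + 1),
        if u + v = k then (i.choose u) * (l.choose v) else 0 := by
      refine Finset.sum_congr rfl fun u hu => Finset.sum_congr rfl fun v hv => ?_
      have hcond : ((s : ℤ) = (i : ℤ) - 2 * u + l - 2 * v) ↔ (u + v = k) := by omega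
      exact if_congr hcond rfl rfl
    rw [step1]
    -- Step 2: extend ranges to range (i + l + 1)
    set N := i + l + 1 with hN
    have step2 : (∑ u ∈ Finset.range (i + 1), ∑ v ∈ Finset.range (l + 1),
        if u + v = k then (i.choose u) * (l.choose v) else 0)
        = ∑ u ∈ Finset.range N, ∑ v ∈ Finset.range N,
        if u + v = k then (i.choose u) * (l.choose v) else 0 := by
      rw [Finset.sum_subset (Finset.range_subset_range.2 (by omega : i + 1 ≤ N))]
      · refine Finset.sum_congr rfl fun u hu => ?_
        rw [Finset.sum_subset (Finset.range_subset_range.2 (by omega : l + 1 ≤ N))]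
        intro v _ hv
        have : l < v := by simpa using hv
        simp [Nat.choose_eq_zero_of_lt this]
      · intro u _ hu
        have : i < u := by simpa using hu
        refine Finset.sum_eq_zero fun v _ => ?_
        simp [Nat.choose_eq_zero_of_lt this]
    rw [step2]
    -- Step 3: compute inner sums
    have step3 : ∀ u ∈ Finset.range N, (∑ v ∈ Finset.range N,
        if u + v = k then (i.choose u) * (l.choose v) else 0)
        = if u ≤ k then (i.choose u) * (l.choose (k - u)) else 0 := by
      intro u hu
      by_cases huk : u ≤ k
      · rw [if_pos huk]
        have : ∀ v, (u + v = k) ↔ (v = k - u) := by omega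
        simp only [this]
        rw [Finset.sum_ite_eq' (Finset.range N) (k - u)
          (fun v => (i.choose u) * (l.choose v))]
        rw [if_pos (by simp only [Finset.mem_range]; omega)]
      · rw [if_neg huk]
        refine Finset.sum_eq_zero fun v _ => ?_
        rw [if_neg (by omega)]
    rw [Finset.sum_congr rfl step3]
    -- Step 4: restrict to range (k+1) and apply Vandermonde
    have step4 : (∑ u ∈ Finset.range N,
        if u ≤ k then (i.choose u) * (l.choose (k - u)) else 0)
        = ∑ u ∈ Finset.range (k + 1), (i.choose u) * (l.choose (k - u)) := by
      rw [← Finset.sum_subset (Finset.range_subset_range.2 (by omega : k + 1 ≤ N))]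
      · refine Finset.sum_congr rfl fun u hu => ?_
        rw [if_pos (by simp only [Finset.mem_range] at hu; omega)]
      · intro u _ hu
        rw [if_neg (by simp only [Finset.mem_range] at hu ⊢; omega)]
    rw [step4, Nat.add_choose_eq, Finset.Nat.sum_antidiagonal_eq_sum_range_succ_mk]
  · rw [if_neg h]
    refine Finset.sum_eq_zero fun u hu => Finset.sum_eq_zero fun v hv => ?_
    rw [if_neg]
    intro heq
    exact h (by omega)
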